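/- Let ℰ ⊆ 𝒫 have asymptotic density zero, i.e. T^{−d} #(ℰ ∩ B_T) → 0 as T → ∞, where B_T is the open ball of radius T about the origin in ℝᵈ. Then 𝗆(Σ′) = 1, where Σ′ is the closure in Σ of the set of marks {ς(q) : q ∈ 𝒫 ∖ ℰ}. -/

import Mathlib

open MeasureTheory Set Filter Topology

/-- In the setting of the uniform density condition for the marked point set
`𝒫̃`, if `ℰ ⊆ 𝒫` has asymptotic density zero, then the closure `Σ′` in `Σ` of the set of marks
of points of `𝒫 ∖ ℰ` has full measure: `𝗆(Σ′) = 1`. -/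
theorem marks_closure_full_measure
    (d : ℕ) (hd : 2 ≤ d)
    {Mark : Type*} [MetricSpace Mark] [CompactSpace Mark] [MeasurableSpace Mark]
    [BorelSpace Mark]
    (m : Measure Mark) [IsProbabilityMeasure m]
    (P : Set (EuclideanSpace ℝ (Fin d)))
    (hPlf : ∀ B : Set (EuclideanSpace ℝ (Fin d)), Bornology.IsBounded B → (P ∩ B).Finite)
    (ς : EuclideanSpace ℝ (Fin d) → Mark)
    (c : ℝ) (hc : 0 < c)
    (hdens : ∀ B : Set (EuclideanSpace ℝ (Fin d) × Mark), Bornology.IsBounded B →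
      ((volume : Measure (EuclideanSpace ℝ (Fin d))).prod m) (frontier B) = 0 →
      Tendsto (fun T : ℝ =>
          (({p ∈ P | (T⁻¹ • p, ς p) ∈ B}).ncard : ℝ) / T ^ d)
        atTop
        (𝓝 (c * (((volume : Measure (EuclideanSpace ℝ (Fin d))).prod m) B).toReal)))
    (E : Set (EuclideanSpace ℝ (Fin d))) (hEP : E ⊆ P)
    (hEdens : Tendsto (fun T : ℝ => ((E ∩ Metric.ball 0 T).ncard : ℝ) / T ^ d)
      atTop (𝓝 0)) :
    m (closure (ς '' (P \ E))) = 1 := by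
  classical
  set S : Set Mark := closure (ς '' (P \ E)) with hSdef
  by_contra hne
  have hSm : MeasurableSet S := isClosed_closure.measurableSet
  have hlt : m S < 1 := lt_of_le_of_ne prob_le_one hne
  have hUne : m Sᶜ ≠ 0 := by
    rw [measure_compl hSm (measure_ne_top m S), measure_univ]
    intro h
    rw [tsub_eq_zero_iff_le] at h
    exact absurd h (not_le.mpr hlt)
  obtain ⟨x, hxU, hx⟩ := MeasureTheory.exists_mem_forall_mem_nhdsWithin_pos_measure hUne
  -- find a ball around x inside Sᶜ
  obtain ⟨r0, hr0pos, hr0sub⟩ :=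
    Metric.isOpen_iff.mp (isClosed_closure.isOpen_compl) x hxU
  -- find a smaller radius with null frontier
  obtain ⟨r, hrIoo, hrfr⟩ :=
    MeasureTheory.exists_null_frontier_thickening m ({x} : Set Mark) hr0pos
  rw [Metric.thickening_singleton] at hrfr
  set A : Set Mark := Metric.ball x r with hAdef
  have hApos : 0 < m A :=
    hx A (mem_nhdsWithin_of_mem_nhds (Metric.ball_mem_nhds x hrIoo.1))
  have hAsub : A ⊆ Sᶜ := (Metric.ball_subset_ball hrIoo.2.le).trans hr0sub
  set B : Set (EuclideanSpace ℝ (Fin d) × Mark) :=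
    (Metric.ball (0 : EuclideanSpace ℝ (Fin d)) 1) ×ˢ A with hBdef
  have hBbdd : Bornology.IsBounded B :=
    Metric.isBounded_ball.prod (isCompact_univ.isBounded.subset (subset_univ A))
  set μ := ((volume : Measure (EuclideanSpace ℝ (Fin d))).prod m)
  have hfr : μ (frontier B) = 0 := by
    rw [hBdef, frontier_prod_eq]
    refine le_antisymm ((measure_union_le _ _).trans_eq ?_) zero_le
    rw [Measure.prod_prod, Measure.prod_prod, hrfr, mul_zero, zero_add,
      frontier_ball (0 : EuclideanSpace ℝ (Fin d)) (one_ne_zero)]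
    have hs : volume (Metric.sphere (0 : EuclideanSpace ℝ (Fin d)) 1) = 0 :=
      Measure.addHaar_sphere_of_ne_zero _ _ one_ne_zero
    rw [hs, zero_mul]
  have hlim := hdens B hBbdd hfr
  have hμB : μ B = volume (Metric.ball (0 : EuclideanSpace ℝ (Fin d)) 1) * m A :=
    Measure.prod_prod _ _
  have hμBpos : 0 < μ B := by
    rw [hμB]
    exact ENNReal.mul_pos (Metric.measure_ball_pos _ _ one_pos).ne' hApos.ne'
  have hμBfin : μ B ≠ ⊤ := by
    rw [hμB]
    exact ENNReal.mul_ne_top measure_ball_lt_top.ne (measure_ne_top m A)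
  have hLpos : 0 < c * (μ B).toReal :=
    mul_pos hc (ENNReal.toReal_pos hμBpos.ne' hμBfin)
  -- the counting set is contained in E ∩ ball 0 T
  have hsubE : ∀ T : ℝ, 0 < T →
      {p ∈ P | (T⁻¹ • p, ς p) ∈ B} ⊆ E ∩ Metric.ball 0 T := by
    intro T hT p hp
    have hpP : p ∈ P := hp.1
    have hp1 : T⁻¹ • p ∈ Metric.ball (0 : EuclideanSpace ℝ (Fin d)) 1 := hp.2.1
    have hp2 : ς p ∈ A := hp.2.2
    have hpE : p ∈ E := by
      by_contra hpe
      have : ς p ∈ S := subset_closure ⟨p, ⟨hpP, hpe⟩, rfl⟩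
      exact hAsub hp2 this
    refine ⟨hpE, ?_⟩
    have h1 : ‖T⁻¹ • p‖ < 1 := by simpa [Metric.mem_ball] using hp1
    rw [norm_smul, norm_inv, Real.norm_eq_abs, abs_of_pos hT] at h1
    have : ‖p‖ < T := by
      have := (inv_mul_lt_iff₀ hT).mp h1
      simpa using this
    simpa [Metric.mem_ball, dist_eq_norm] using this
  have hzero : Tendsto (fun T : ℝ =>
      (({p ∈ P | (T⁻¹ • p, ς p) ∈ B}).ncard : ℝ) / T ^ d) atTop (𝓝 0) := by
    apply squeeze_zero' ?_ ?_ hEdens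
    · filter_upwards [eventually_gt_atTop (0 : ℝ)] with T hT
      positivity
    · filter_upwards [eventually_gt_atTop (0 : ℝ)] with T hT
      have hfin : (E ∩ Metric.ball 0 T).Finite :=
        ((hPlf (Metric.ball 0 T) Metric.isBounded_ball).subset
          (inter_subset_inter_left _ hEP))
      have hle := Set.ncard_le_ncard (hsubE T hT) hfin
      have hTd : (0:ℝ) < T ^ d := by positivity
      exact div_le_div_of_nonneg_right (by exact_mod_cast hle) hTd.le |>.trans_eq rfl
  have := tendsto_nhds_unique hlim hzero
  exact absurd this hLpos.ne'
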